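/- Let Γμ: ℝ^N_+ → ℝ^N_+ be continuous, monotone and strictly increasing, and let w ∈ ℝ^N_+ satisfy w ≫ 0, Γμ(w) ≪ w and lim_{k→∞} Γμ^k(w) = 0. Define σ: [0,1] → ℝ^N_+ by σ(0) = 0 and σ(r) = (k² + k)·[(1/k − r)·Γμ^k(w) + (r − 1/(k+1))·Γμ^{k−1}(w)] for r ∈ (1/(k+1), 1/k], k ∈ ℕ. Then σ is continuous on [0,1], satisfies σ(1/k) = Γμ^{k−1}(w) for every k ∈ ℕ and σ(1) = w, and each component function σ_i: [0,1] → ℝ_+ is strictly increasing. -/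

import Mathlib

set_option maxHeartbeats 2000000 in
/-- Properties of the linear-interpolation path `σ`: if `Γμ` is continuous,
monotone and strictly increasing on `ℝ^N_+`, `w ≫ 0`, `Γμ(w) ≪ w` and
`Γμ^k(w) → 0`, then `σ` is continuous on `[0,1]`, satisfies
`σ(1/k) = Γμ^{k−1}(w)` for every `k ≥ 1` and `σ(1) = w`, and every component
function `σ_i` is strictly increasing on `[0,1]`. -/
theorem path_sigma_continuous_and_strictly_increasing
    {N : ℕ}
    (Γμ : EuclideanSpace ℝ (Fin N) → EuclideanSpace ℝ (Fin N))
    (hcont : ContinuousOn Γμ {s : EuclideanSpace ℝ (Fin N) | ∀ i, 0 ≤ s i})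
    (hmaps : ∀ v : EuclideanSpace ℝ (Fin N), (∀ i, 0 ≤ v i) → ∀ i, 0 ≤ Γμ v i)
    (hmono : ∀ v w : EuclideanSpace ℝ (Fin N), (∀ i, 0 ≤ v i) → (∀ i, 0 ≤ w i) →
      (∀ i, v i ≤ w i) → ∀ i, Γμ v i ≤ Γμ w i)
    (hsincr : ∀ v w : EuclideanSpace ℝ (Fin N), (∀ i, 0 ≤ v i) →
      (∀ i, 0 ≤ w i) → (∀ i, v i < w i) → ∀ i, Γμ v i < Γμ w i)
    (w : EuclideanSpace ℝ (Fin N)) (hw : ∀ i, 0 < w i)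
    (hdecay : ∀ i, Γμ w i < w i)
    (hlim : Filter.Tendsto (fun k => Γμ^[k] w) Filter.atTop (nhds 0))
    (σ : ℝ → EuclideanSpace ℝ (Fin N))
    (hσ0 : σ 0 = 0)
    (hσ : ∀ k : ℕ, 0 < k → ∀ r : ℝ, 1 / ((k : ℝ) + 1) < r → r ≤ 1 / (k : ℝ) →
      σ r = ((k : ℝ) ^ 2 + k) •
        ((1 / (k : ℝ) - r) • Γμ^[k] w + (r - 1 / ((k : ℝ) + 1)) • Γμ^[k - 1] w)) :
    ContinuousOn σ (Set.Icc 0 1) ∧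
      (∀ k : ℕ, 0 < k → σ (1 / (k : ℝ)) = Γμ^[k - 1] w) ∧
      σ 1 = w ∧
      ∀ i : Fin N, StrictMonoOn (fun r => σ r i) (Set.Icc 0 1) := by
  -- nonnegativity of iterates
  have hnn : ∀ k : ℕ, ∀ i, 0 ≤ Γμ^[k] w i := by
    intro k
    induction k with
    | zero => exact fun i => (hw i).le
    | succ k ih =>
      intro i
      rw [Function.iterate_succ_apply']
      exact hmaps _ ih i
  -- strict decrease of iterates
  have hdec : ∀ k : ℕ, ∀ i, Γμ^[k + 1] w i < Γμ^[k] w i := by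
    intro k
    induction k with
    | zero => simpa using hdecay
    | succ k ih =>
      intro i
      have h' := hsincr _ _ (hnn (k + 1)) (hnn k) ih i
      rwa [← Function.iterate_succ_apply' Γμ (k + 1), ← Function.iterate_succ_apply' Γμ k] at h'
  have hanti : ∀ i, Antitone (fun k => Γμ^[k] w i) := fun i =>
    antitone_nat_of_succ_le fun k => (hdec k i).le
  -- the segment formula, valid on the closed interval
  have hseg : ∀ k : ℕ, 0 < k → ∀ r : ℝ, 1 / ((k : ℝ) + 1) ≤ r → r ≤ 1 / (k : ℝ) → ∀ i,
      σ r i = Γμ^[k] w i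
        + ((k : ℝ) ^ 2 + k) * (r - 1 / ((k : ℝ) + 1)) * (Γμ^[k - 1] w i - Γμ^[k] w i) := by
    intro k hk r h1 h2 i
    have hkR : (0 : ℝ) < k := by exact_mod_cast hk
    rcases eq_or_lt_of_le h1 with he | hlt
    · -- r is the left endpoint; use the formula for `k+1` there
      have hkey := hσ (k + 1) (Nat.succ_pos k) r
        (by
          rw [← he]; push_cast
          apply one_div_lt_one_div_of_lt (by positivity)
          linarith)
        (by rw [← he]; push_cast; exact le_rfl)
      rw [hkey]
      have hr : r = 1 / ((k : ℝ) + 1) := he.symm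
      simp only [Nat.add_sub_cancel, PiLp.smul_apply, PiLp.add_apply, smul_eq_mul]
      push_cast
      rw [hr]
      field_simp
      ring
    · rw [hσ k hk r hlt h2]
      simp only [PiLp.smul_apply, PiLp.add_apply, smul_eq_mul]
      field_simp
      ring
  -- value at 1/k
  have hval : ∀ k : ℕ, 0 < k → σ (1 / (k : ℝ)) = Γμ^[k - 1] w := by
    intro k hk
    have hkR : (0 : ℝ) < k := by exact_mod_cast hk
    ext i
    have h1 : 1 / ((k : ℝ) + 1) ≤ 1 / (k : ℝ) :=
      (one_div_lt_one_div_of_lt hkR (by linarith)).le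
    rw [hseg k hk _ h1 le_rfl i]
    field_simp
    ring
  have hσ1 : σ 1 = w := by
    have := hval 1 one_pos
    simpa using this
  -- componentwise bounds on each open-closed segment
  have hbound : ∀ k : ℕ, 0 < k → ∀ r : ℝ, 1 / ((k : ℝ) + 1) < r → r ≤ 1 / (k : ℝ) → ∀ i,
      Γμ^[k] w i < σ r i ∧ σ r i ≤ Γμ^[k - 1] w i := by
    intro k hk r h1 h2 i
    have hkR : (0 : ℝ) < k := by exact_mod_cast hk
    rw [hseg k hk r h1.le h2 i]
    have hd : Γμ^[k] w i < Γμ^[k - 1] w i := by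
      have h' := hdec (k - 1) i
      rwa [show k - 1 + 1 = k from by omega] at h'
    have hm : (0 : ℝ) < (k : ℝ) ^ 2 + k := by positivity
    constructor
    · have := mul_pos (mul_pos hm (sub_pos.2 h1)) (sub_pos.2 hd)
      linarith
    · have h3 : ((k : ℝ) ^ 2 + k) * (r - 1 / ((k : ℝ) + 1)) ≤ 1 := by
        have hone : ((k : ℝ) ^ 2 + k) * (1 / (k : ℝ) - 1 / ((k : ℝ) + 1)) = 1 := by
          field_simp; ring
        nlinarith
      nlinarith [mul_le_mul_of_nonneg_right h3 (sub_pos.2 hd).le]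
  -- locating a point of (0,1] in its segment
  have hfloor : ∀ r : ℝ, 0 < r → r ≤ 1 →
      ∃ k : ℕ, 0 < k ∧ 1 / ((k : ℝ) + 1) < r ∧ r ≤ 1 / (k : ℝ) := by
    intro r h0 h1
    have h1r : (1 : ℝ) ≤ 1 / r := (le_div_iff₀ h0).2 (by linarith)
    refine ⟨⌊1 / r⌋₊, ?_, ?_, ?_⟩
    · exact Nat.le_floor (by exact_mod_cast h1r)
    · have hlt : 1 / r < (⌊1 / r⌋₊ : ℝ) + 1 := Nat.lt_floor_add_one _
      have := (div_lt_iff₀ h0).1 hlt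
      rw [div_lt_iff₀ (by positivity : (0 : ℝ) < (⌊1 / r⌋₊ : ℝ) + 1)]
      nlinarith
    · have hkpos : (0 : ℝ) < (⌊1 / r⌋₊ : ℝ) := by
        have : (1 : ℕ) ≤ ⌊1 / r⌋₊ := Nat.le_floor (by exact_mod_cast h1r)
        exact_mod_cast this
      have hle : (⌊1 / r⌋₊ : ℝ) ≤ 1 / r := Nat.floor_le (by positivity)
      rw [le_div_iff₀ hkpos]
      have h2 := mul_le_mul_of_nonneg_left hle h0.le
      have h3 : r * (1 / r) = 1 := mul_one_div_cancel (ne_of_gt h0)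
      linarith
  have hσ0i : ∀ i, σ 0 i = 0 := by intro i; rw [hσ0]; rfl
  -- strict monotonicity of components
  have hsm : ∀ i : Fin N, StrictMonoOn (fun r => σ r i) (Set.Icc 0 1) := by
    intro i r hr s hs hrs
    obtain ⟨ks, hks, hks1, hks2⟩ := hfloor s (lt_of_le_of_lt hr.1 hrs) hs.2
    have hbs := hbound ks hks s hks1 hks2 i
    rcases eq_or_lt_of_le hr.1 with h0 | h0
    · have hr0 : σ r i = 0 := by rw [← h0]; exact hσ0i i
      show σ r i < σ s i
      rw [hr0]
      exact lt_of_le_of_lt (hnn ks i) hbs.1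
    · obtain ⟨kr, hkr, hkr1, hkr2⟩ := hfloor r h0 hr.2
      have hks_le : ks ≤ kr := by
        by_contra h
        push_neg at h
        have hcast : (kr : ℝ) + 1 ≤ (ks : ℝ) := by exact_mod_cast h
        have : 1 / (ks : ℝ) ≤ 1 / ((kr : ℝ) + 1) :=
          one_div_le_one_div_of_le (by positivity) hcast
        linarith
      rcases eq_or_lt_of_le hks_le with he | hlt2
      · subst he
        have hkR : (0 : ℝ) < ks := by exact_mod_cast hks
        show σ r i < σ s i
        rw [hseg ks hks r (by linarith) hkr2 i, hseg ks hks s hks1.le hks2 i]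
        have hd : Γμ^[ks] w i < Γμ^[ks - 1] w i := by
          have h' := hdec (ks - 1) i
          rwa [show ks - 1 + 1 = ks from by omega] at h'
        have hm : (0 : ℝ) < (ks : ℝ) ^ 2 + ks := by positivity
        nlinarith [mul_pos (mul_pos hm (sub_pos.2 hrs)) (sub_pos.2 hd)]
      · have hbr := hbound kr hkr r hkr1 hkr2 i
        have hmid : Γμ^[kr - 1] w i ≤ Γμ^[ks] w i := hanti i (by omega)
        have := hbr.2
        have := hbs.1
        simp only []
        linarith
  -- surjectivity of components onto [0, w i]
  have hsurj : ∀ i : Fin N, Set.SurjOn (fun r => σ r i) (Set.Icc 0 1) (Set.Icc 0 (w i)) := by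
    intro i y hy
    rcases eq_or_lt_of_le hy.1 with h0 | h0
    · exact ⟨0, ⟨le_refl 0, zero_le_one⟩, by simpa [hσ0i i] using h0⟩
    · have hlimi : Filter.Tendsto (fun k => Γμ^[k] w i) Filter.atTop (nhds 0) := by
        have hC : Continuous (fun v : EuclideanSpace ℝ (Fin N) => v i) :=
          (continuous_apply i).comp (PiLp.continuous_ofLp (p := 2) (β := fun _ : Fin N => ℝ))
        have := (hC.tendsto 0).comp hlim
        simpa [Function.comp_def] using this
      have hex : ∃ k, Γμ^[k] w i < y := (hlimi.eventually (gt_mem_nhds h0)).exists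
      classical
      set k := Nat.find hex with hkdef
      have hklt : Γμ^[k] w i < y := Nat.find_spec hex
      have hk1 : 0 < k := by
        rcases Nat.eq_zero_or_pos k with h | h
        · exfalso
          have := hklt
          rw [h] at this
          simp only [Function.iterate_zero_apply] at this
          linarith [hy.2]
        · exact h
      have hkR : (0 : ℝ) < k := by exact_mod_cast hk1
      have hky : y ≤ Γμ^[k - 1] w i :=
        le_of_not_gt (Nat.find_min hex (by omega))
      have hd : Γμ^[k] w i < Γμ^[k - 1] w i := lt_of_lt_of_le hklt hky
      set m : ℝ := ((k : ℝ) ^ 2 + k) * (Γμ^[k - 1] w i - Γμ^[k] w i) with hm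
      have hmpos : 0 < m := mul_pos (by positivity) (sub_pos.2 hd)
      set r : ℝ := 1 / ((k : ℝ) + 1) + (y - Γμ^[k] w i) / m with hrdef
      have hr1 : 1 / ((k : ℝ) + 1) < r := by
        have : 0 < (y - Γμ^[k] w i) / m := div_pos (sub_pos.2 hklt) hmpos
        rw [hrdef]; linarith
      have hr2 : r ≤ 1 / (k : ℝ) := by
        have h1 : (y - Γμ^[k] w i) / m ≤ (Γμ^[k - 1] w i - Γμ^[k] w i) / m :=
          (div_le_div_iff_of_pos_right hmpos).2 (by linarith)
        have hdne : Γμ^[k - 1] w i - Γμ^[k] w i ≠ 0 := ne_of_gt (sub_pos.2 hd)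
        have h2 : (Γμ^[k - 1] w i - Γμ^[k] w i) / m = 1 / (k : ℝ) - 1 / ((k : ℝ) + 1) := by
          rw [hm]
          field_simp
          ring
        rw [hrdef]; linarith
      have hr0 : 0 < r := lt_trans (by positivity) hr1
      have hrle1 : r ≤ 1 := by
        have hk1' : 1 / (k : ℝ) ≤ 1 := by
          rw [div_le_one hkR]; exact_mod_cast hk1
        exact hr2.trans hk1'
      refine ⟨r, ⟨hr0.le, hrle1⟩, ?_⟩
      show σ r i = y
      rw [hseg k hk1 r hr1.le hr2 i]
      have hrw : r - 1 / ((k : ℝ) + 1) = (y - Γμ^[k] w i) / m := by rw [hrdef]; ring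
      rw [hrw, hm]
      have hdne : Γμ^[k - 1] w i - Γμ^[k] w i ≠ 0 := ne_of_gt (sub_pos.2 hd)
      field_simp
      ring
  -- continuity of each component on [0,1]
  have hconti : ∀ i : Fin N, ContinuousOn (fun r => σ r i) (Set.Icc 0 1) := by
    intro i
    intro a ha
    have hmon := (hsm i).monotoneOn
    have hf0 : σ 0 i = 0 := hσ0i i
    have hf1 : σ 1 i = w i := by rw [hσ1]
    have hfanonneg : 0 ≤ σ a i := by
      have := hmon ⟨le_rfl, zero_le_one⟩ ha ha.1
      simpa [hf0] using this
    have hfaw : σ a i ≤ w i := by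
      have := hmon ha ⟨zero_le_one, le_rfl⟩ ha.2
      simpa [hf1] using this
    have hright : a < 1 → ContinuousWithinAt (fun r => σ r i) (Set.Ici a) a := by
      intro h1
      refine (hsm i).continuousWithinAt_right_of_exists_between
        (Icc_mem_nhdsGE_of_mem ⟨ha.1, h1⟩) ?_
      intro b hb
      have hfa1 : σ a i < w i := by
        have := hsm i ha ⟨zero_le_one, le_rfl⟩ h1
        simpa [hf1] using this
      obtain ⟨c, hc, hfc⟩ := hsurj i (show min b (w i) ∈ Set.Icc 0 (w i) from
        ⟨le_min (le_trans hfanonneg hb.le) (hw i).le, min_le_right _ _⟩)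
      have hfc' : σ c i = min b (w i) := hfc
      exact ⟨c, hc, by
        show σ c i ∈ Set.Ioc (σ a i) b
        rw [hfc']
        exact ⟨lt_min hb hfa1, min_le_left _ _⟩⟩
    have hleft : 0 < a → ContinuousWithinAt (fun r => σ r i) (Set.Iic a) a := by
      intro h0
      refine (hsm i).continuousWithinAt_left_of_exists_between
        (Icc_mem_nhdsLE_of_mem ⟨h0, ha.2⟩) ?_
      intro b hb
      have hfa0 : 0 < σ a i := by
        have := hsm i ⟨le_rfl, zero_le_one⟩ ha h0
        simpa [hf0] using this
      obtain ⟨c, hc, hfc⟩ := hsurj i (show max b 0 ∈ Set.Icc 0 (w i) from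
        ⟨le_max_right _ _, max_le (le_trans hb.le hfaw) (hw i).le⟩)
      have hfc' : σ c i = max b 0 := hfc
      exact ⟨c, hc, by
        show σ c i ∈ Set.Ico b (σ a i)
        rw [hfc']
        exact ⟨le_max_left _ _, max_lt hb hfa0⟩⟩
    rcases eq_or_lt_of_le ha.1 with h0 | h0
    · have h1 : a < 1 := by rw [← h0]; norm_num
      have hsub : Set.Icc (0 : ℝ) 1 ⊆ Set.Ici a := by
        rw [← h0]; intro x hx; exact hx.1
      exact (hright h1).mono hsub
    · rcases eq_or_lt_of_le ha.2 with h1 | h1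
      · have hsub : Set.Icc (0 : ℝ) 1 ⊆ Set.Iic a := by
        -- a = 1
          rw [h1]; intro x hx; exact hx.2
        exact (hleft h0).mono hsub
      · have hu := (hleft h0).union (hright h1)
        exact hu.mono fun x _ => (le_total x a).imp id id
  -- assemble
  refine ⟨?_, hval, hσ1, hsm⟩
  have hpi : ContinuousOn (fun r => fun i : Fin N => σ r i) (Set.Icc 0 1) := by
    apply continuousOn_pi.2
    exact hconti
  have := (PiLp.continuous_toLp (p := 2) (β := fun _ : Fin N => ℝ)).comp_continuousOn hpi
  exact this
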